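/- Let a > 0, h > 0, c > 0 and μ < 0 satisfy the system 1 − a h e^{−μch} = 0 and μ² − cμ − 1 − a e^{−cμh} = 0 (this is the system obtained by setting g'(κ) = −a in 1 + h g'(κ)e^{−μch} = 0, χ_κ(μ) = 0). Then μ = ln(ah)/(ch) = (c − √(c² + 4 + 4/h))/2, moreover ah < 1, 1 + h + ln(ah) > 0, and c = −ln(ah)/√(h(1 + h + ln(ah))). -/

import Mathlib

open Real

/-- Solving the system `1 - a h e^{-μch} = 0`, `μ² - cμ - 1 - a e^{-cμh} = 0`
(describing the curved part `Γ₁` of the boundary of the region `D_*`): the zero `μ` is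
given explicitly, `ah < 1`, `1 + h + ln(ah) > 0`, and the speed `c` satisfies
`c = -ln(ah)/√(h(1 + h + ln(ah)))`. -/
theorem boundary_curve_formulas
    (a h c μ : ℝ) (ha : 0 < a) (hh : 0 < h) (hc : 0 < c) (hμ : μ < 0)
    (h1 : 1 - a * h * Real.exp (-(μ * c * h)) = 0)
    (h2 : μ ^ 2 - c * μ - 1 - a * Real.exp (-(c * μ * h)) = 0) :
    μ = Real.log (a * h) / (c * h) ∧
    μ = (c - Real.sqrt (c ^ 2 + 4 + 4 / h)) / 2 ∧
    a * h < 1 ∧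
    0 < 1 + h + Real.log (a * h) ∧
    c = -Real.log (a * h) / Real.sqrt (h * (1 + h + Real.log (a * h))) := by
  have hah : (0:ℝ) < a * h := mul_pos ha hh
  have he : a * h * Real.exp (-(μ * c * h)) = 1 := by linarith
  rw [Real.exp_neg] at he
  have hEpos := Real.exp_pos (μ * c * h)
  have hexp : a * h = Real.exp (μ * c * h) := by
    field_simp at he
    rw [he]; ring_nf
  have hlog : Real.log (a * h) = μ * c * h := by rw [hexp, Real.log_exp]
  have hL : μ * c * h < 0 := by
    have := mul_pos hc hh
    nlinarith
  -- rewrite h2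
  have hexp2 : a * Real.exp (-(c * μ * h)) = 1 / h := by
    rw [show -(c * μ * h) = -(μ * c * h) by ring, Real.exp_neg, ← hexp]
    field_simp
  have hq : μ ^ 2 - c * μ - 1 - 1 / h = 0 := by rw [hexp2] at h2; linarith
  have hq' : μ ^ 2 * h - c * μ * h - h - 1 = 0 := by
    have hne : h ≠ 0 := ne_of_gt hh
    field_simp at hq
    linarith
  have key : c ^ 2 * h * (1 + h + μ * c * h) = (μ * c * h) ^ 2 := by
    linear_combination (-(c ^ 2 * h)) * hq'
  have hL2 : 0 < (μ * c * h) ^ 2 := by nlinarith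
  have hpos : 0 < 1 + h + μ * c * h := by
    nlinarith [mul_pos (pow_pos hc 2) hh]
  refine ⟨?_, ?_, ?_, ?_, ?_⟩
  · rw [hlog]; field_simp
  · have hsq : c ^ 2 + 4 + 4 / h = (c - 2 * μ) ^ 2 := by
      have hne : h ≠ 0 := ne_of_gt hh
      field_simp
      nlinarith [hq']
    rw [hsq, Real.sqrt_sq (by nlinarith : (0:ℝ) ≤ c - 2 * μ)]
    ring
  · exact (Real.log_neg_iff hah).mp (by rw [hlog]; exact hL)
  · rw [hlog]; exact hpos
  · have hs : Real.sqrt (h * (1 + h + μ * c * h)) = -(μ * c * h) / c := by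
      rw [show h * (1 + h + μ * c * h) = (-(μ * c * h) / c) ^ 2 by
        rw [div_pow, eq_div_iff (by positivity : (c:ℝ) ^ 2 ≠ 0)]
        linear_combination key]
      exact Real.sqrt_sq (div_nonneg (by linarith) hc.le)
    rw [hlog, hs]
    have hLne : μ * c * h ≠ 0 := ne_of_lt hL
    field_simp
    rw [div_self (ne_of_lt hμ)]
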